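/- Assume K₂ > 0. If real numbers θ̃₁, θ̃₂, θ̃₃ satisfy θ̃₃ ≥ θ̃₂ ≥ θ̃₁ and D := θ̃₃ − θ̃₁ satisfies 0 ≤ D ≤ 2π/3 − δ for some δ ∈ (0, 2π/3], then the expression −(2K₂/3)·cos(D/2+π/6)·[2sin(D/2+π/6) − cos(θ̃₂ − (θ̃₃+θ̃₁)/2)] is at most −(2K₂/15)·sin(δ/2)·D. -/

import Mathlib

open Real

lemma sin_lower (D : ℝ) (h0 : 0 ≤ D) (h1 : D ≤ 2*π/3) :
    D/5 + 1 ≤ 2 * Real.sin (D/2 + π/6) := by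
  have hπ := Real.pi_pos
  have hπ' := Real.pi_gt_three
  set t : ℝ := 3*D/(2*π) with ht
  have ht0 : 0 ≤ t := by positivity
  have ht1 : t ≤ 1 := by
    rw [ht, div_le_one (by positivity)]; linarith
  have hconc := (strictConcaveOn_sin_Icc).concaveOn
  have key := hconc.2 (show (π/6) ∈ Set.Icc 0 π by
      constructor <;> [positivity; linarith])
    (show (π/2) ∈ Set.Icc 0 π by constructor <;> [positivity; linarith])
    (show (0:ℝ) ≤ 1 - t by linarith) ht0 (by ring)
  have harg : (1-t) • (π/6) + t • (π/2) = D/2 + π/6 := by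
    simp only [smul_eq_mul]
    rw [ht]
    field_simp
    ring
  rw [harg, Real.sin_pi_div_six, Real.sin_pi_div_two] at key
  have h5 : D/5 ≤ t := by
    rw [ht, le_div_iff₀ (by positivity)]
    nlinarith [mul_nonneg h0 (by linarith [Real.pi_lt_d2] : (0:ℝ) ≤ 15 - 2*π)]
  have : (1-t) • (1/2 : ℝ) + t • (1:ℝ) = 1/2 + t/2 := by
    simp [smul_eq_mul]; ring
  rw [this] at key
  linarith

theorem stmt17 (K₂ : ℝ) (hK₂ : 0 < K₂) (δ : ℝ) (hδ : δ ∈ Set.Ioc 0 (2*π/3))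
    (θ₁ θ₂ θ₃ : ℝ) (h₁₂ : θ₁ ≤ θ₂) (h₂₃ : θ₂ ≤ θ₃)
    (D : ℝ) (hD : D = θ₃ - θ₁) (hD' : D ≤ 2*π/3 - δ) :
    -(2*K₂/3) * cos (D/2 + π/6) * (2 * sin (D/2 + π/6) - cos (θ₂ - (θ₃ + θ₁)/2))
      ≤ -(2*K₂/15) * sin (δ/2) * D := by
  obtain ⟨hδ0, hδ2⟩ := hδ
  have hπ := Real.pi_pos
  have hD0 : 0 ≤ D := by rw [hD]; linarith
  have hDle : D ≤ 2*π/3 := by linarith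
  -- cos bound
  have hcos : Real.sin (δ/2) ≤ Real.cos (D/2 + π/6) := by
    have : Real.sin (δ/2) = Real.cos (π/2 - δ/2) := by
      rw [Real.cos_pi_div_two_sub]
    rw [this]
    apply Real.cos_le_cos_of_nonneg_of_le_pi (by positivity) (by linarith) (by linarith)
  have hsinδ : 0 < Real.sin (δ/2) := by
    apply Real.sin_pos_of_pos_of_lt_pi (by positivity); linarith
  have hE : D/5 ≤ 2 * Real.sin (D/2 + π/6) - Real.cos (θ₂ - (θ₃ + θ₁)/2) := by
    have h1 := sin_lower D hD0 hDle
    have h2 := Real.cos_le_one (θ₂ - (θ₃ + θ₁)/2)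
    linarith
  have hmul : Real.sin (δ/2) * (D/5) ≤
      Real.cos (D/2 + π/6) * (2 * Real.sin (D/2 + π/6) - Real.cos (θ₂ - (θ₃ + θ₁)/2)) :=
    mul_le_mul hcos hE (by linarith) (by linarith)
  nlinarith [mul_le_mul_of_nonneg_left hmul (le_of_lt (by positivity : (0:ℝ) < 2*K₂/3))]
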